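/- Let G and H be graphs with V(G)=V(H) and E(G)∩E(H)=∅. Let |V(G)|=n, let r be the minimum degree of G, and let s be the maximum degree of H. If 2r − 8s² − s − 1 > n, then G contains a Hamilton cycle such that whenever (a,b) and (c,d) are both edges of the cycle, the pairs (b,c) and (d,a) are not both edges of H. -/

import Mathlib

open Finset

set_option linter.unusedSectionVars false
set_option linter.unusedVariables false
set_option maxHeartbeats 1000000

namespace DKS


section zmod
variable {n : ℕ} [NeZero n]

lemma val_inj {a b : ZMod n} (h : a.val = b.val) : a = b := by
  have := ZMod.natCast_rightInverse (n := n)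
  rw [← this a, ← this b, h]

lemma val_sub' (a b : ZMod n) (h : b.val ≤ a.val) : (a - b).val = a.val - b.val := by
  have h1 : ((a.val - b.val : ℕ) : ZMod n) = a - b := by
    push_cast [Nat.cast_sub h]
    rw [ZMod.natCast_rightInverse a, ZMod.natCast_rightInverse b]
  rw [← h1, ZMod.val_natCast, Nat.mod_eq_of_lt]
  exact lt_of_le_of_lt (Nat.sub_le _ _) a.val_lt

lemma val_one_of (h : 1 < n) : (1 : ZMod n).val = 1 := by
  rw [← Nat.cast_one, ZMod.val_natCast, Nat.mod_eq_of_lt h]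

lemma val_add_one {a : ZMod n} (h : a.val + 1 < n) : (a + 1).val = a.val + 1 := by
  rw [ZMod.val_add, val_one_of (by omega), Nat.mod_eq_of_lt h]

/-- reversal map for the 2-opt exchange with parameter `i`. -/
def rho (i : ZMod n) : ZMod n → ZMod n := fun m =>
  if 1 ≤ m.val ∧ m.val ≤ i.val then i + 1 - m else m

/-- induced map on edge-positions. -/
def phm (i : ZMod n) : ZMod n → ZMod n := fun m =>
  if 1 ≤ m.val ∧ m.val ≤ i.val - 1 then i - m else m

variable {i : ZMod n}

lemma rho_val_sub (hi : i.val + 1 < n) {m : ZMod n} (h1 : 1 ≤ m.val) (h2 : m.val ≤ i.val) :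
    (i + 1 - m).val = i.val + 1 - m.val := by
  rw [val_sub' _ _ (by rw [val_add_one hi]; omega), val_add_one hi]

lemma rho_invol (hi : i.val + 1 < n) : Function.Involutive (rho i) := by
  intro m
  unfold rho
  by_cases h : 1 ≤ m.val ∧ m.val ≤ i.val
  · rw [if_pos h]
    have hv : (i + 1 - m).val = i.val + 1 - m.val := rho_val_sub hi h.1 h.2
    rw [if_pos (by omega)]
    ring
  · rw [if_neg h, if_neg h]

lemma phm_val_sub (hi : i.val + 1 < n) {m : ZMod n} (h1 : 1 ≤ m.val) (h2 : m.val ≤ i.val - 1) :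
    (i - m).val = i.val - m.val :=
  val_sub' _ _ (by omega)

lemma phm_invol (hi : i.val + 1 < n) : Function.Involutive (phm i) := by
  intro m
  unfold phm
  by_cases h : 1 ≤ m.val ∧ m.val ≤ i.val - 1
  · rw [if_pos h]
    have hv : (i - m).val = i.val - m.val := phm_val_sub hi h.1 h.2
    rw [if_pos (by omega)]
    ring
  · rw [if_neg h, if_neg h]

lemma phm_zero : phm i 0 = 0 := by
  unfold phm; rw [if_neg (by simp [ZMod.val_zero])]

lemma phm_self : phm i i = i := by
  unfold phm; rw [if_neg (by omega)]

lemma rho_zero : rho i 0 = 0 := by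
  unfold rho; rw [if_neg (by simp [ZMod.val_zero])]

lemma rho_one (hn : 1 < n) (h2 : 1 ≤ i.val) : rho i 1 = i := by
  unfold rho; rw [if_pos (by rw [val_one_of hn]; omega)]; ring

lemma rho_self (h2 : 1 ≤ i.val) : rho i i = 1 := by
  unfold rho; rw [if_pos (by omega)]; ring

lemma rho_succ (hi : i.val + 1 < n) : rho i (i + 1) = i + 1 := by
  unfold rho; rw [if_neg (by rw [val_add_one hi]; omega)]

lemma transfer (hi2 : 2 ≤ i.val) (hi : i.val + 1 < n) {k : ZMod n} (hk0 : k ≠ 0) (hki : k ≠ i) :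
    (rho i k = phm i k + 1 ∧ rho i (k + 1) = phm i k) ∨
    (rho i k = phm i k ∧ rho i (k + 1) = phm i k + 1) := by
  have hkv : k.val < n := k.val_lt
  have hk0' : k.val ≠ 0 := fun h => hk0 (val_inj (by rw [h, ZMod.val_zero]))
  have hki' : k.val ≠ i.val := fun h => hki (val_inj h)
  rcases lt_or_ge k.val i.val with hlt | hge
  · -- 1 ≤ k.val ≤ i.val - 1 : reversed segment
    left
    have hc : 1 ≤ k.val ∧ k.val ≤ i.val - 1 := ⟨by omega, by omega⟩
    have hk1 : (k + 1).val = k.val + 1 := val_add_one (by omega)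
    constructor
    · unfold rho phm
      rw [if_pos ⟨by omega, by omega⟩, if_pos hc]; ring
    · unfold rho phm
      rw [if_pos (by rw [hk1]; omega), if_pos hc]; ring
  · -- k.val > i.val
    right
    have hgt : i.val < k.val := by omega
    have hr1 : rho i k = k := by unfold rho; rw [if_neg (by omega)]
    have hp1 : phm i k = k := by unfold phm; rw [if_neg (by omega)]
    refine ⟨by rw [hr1, hp1], ?_⟩
    rw [hp1]
    rcases eq_or_lt_of_le (show k.val + 1 ≤ n by omega) with heq | hlt'
    · have : (k + 1).val = 0 := by rw [ZMod.val_add, val_one_of (by omega), heq, Nat.mod_self]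
      unfold rho; rw [if_neg (by omega)]
    · have hk1 : (k + 1).val = k.val + 1 := val_add_one hlt'
      unfold rho; rw [if_neg (by rw [hk1]; omega)]

end zmod



variable {V : Type*} [Fintype V] [DecidableEq V]

/-- Two (potential cycle-) edges `{a,b}`, `{c,d}` form a bad pair w.r.t. `H`. -/
def bd (H : SimpleGraph V) (a b c d : V) : Prop :=
  (H.Adj a c ∧ H.Adj b d) ∨ (H.Adj a d ∧ H.Adj b c)

instance (H : SimpleGraph V) [DecidableRel H.Adj] (a b c d : V) :
    Decidable (bd H a b c d) := by unfold bd; infer_instance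

variable {H : SimpleGraph V}

lemma bd_swap_right {a b c d : V} (h : bd H a b c d) : bd H a b d c := by
  rcases h with ⟨h1, h2⟩ | ⟨h1, h2⟩
  · exact Or.inr ⟨h1, h2⟩
  · exact Or.inl ⟨h1, h2⟩

lemma bd_swap_left {a b c d : V} (h : bd H a b c d) : bd H b a c d := by
  rcases h with ⟨h1, h2⟩ | ⟨h1, h2⟩
  · exact Or.inr ⟨h2, h1⟩
  · exact Or.inl ⟨h2, h1⟩

lemma bd_comm {a b c d : V} (h : bd H a b c d) : bd H c d a b := by
  rcases h with ⟨h1, h2⟩ | ⟨h1, h2⟩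
  · exact Or.inl ⟨h1.symm, h2.symm⟩
  · exact Or.inr ⟨h2.symm, h1.symm⟩

lemma not_bd_self {G : SimpleGraph V} (hdisj : ∀ a b, G.Adj a b → ¬ H.Adj a b)
    {a b : V} (hG : G.Adj a b) : ¬ bd H a b a b := by
  rintro (⟨h1, _⟩ | ⟨h1, h2⟩)
  · exact H.irrefl h1
  · exact hdisj a b hG h1



variable {V : Type*} [Fintype V] [DecidableEq V]


section arr

variable (G H : SimpleGraph V) [DecidableRel G.Adj] [DecidableRel H.Adj]
variable {n : ℕ} [NeZero n]

/-- bad pair of positions -/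
def badp (g : ZMod n ≃ V) (k l : ZMod n) : Prop :=
  bd H (g k) (g (k + 1)) (g l) (g (l + 1))

instance (g : ZMod n ≃ V) (k l : ZMod n) : Decidable (badp H g k l) := by
  unfold badp; infer_instance

def Lset (g : ZMod n ≃ V) (k : ZMod n) : Finset (ZMod n) :=
  univ.filter (fun l => badp H g k l)

def Mc (g : ZMod n ≃ V) : ℕ := ∑ k : ZMod n, (Lset H g k).card

def bE (g : ZMod n ≃ V) : ℕ :=
  (univ.filter (fun k : ZMod n => ¬ G.Adj (g k) (g (k + 1)))).card

def Phi (g : ZMod n ≃ V) : ℕ :=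
  (2 * n * H.maxDegree + 1) * bE G g + Mc H g

variable {G H}

lemma bE_eq_zero_iff {g : ZMod n ≃ V} :
    bE G g = 0 ↔ ∀ k, G.Adj (g k) (g (k + 1)) := by
  unfold bE
  rw [Finset.card_eq_zero, Finset.filter_eq_empty_iff]
  simp

/-- generic counting: positions whose image under an injective map is an `H`-neighbor of `v` -/
lemma card_filter_H_le (v : V) (e : ZMod n → V) (he : Function.Injective e) :
    (univ.filter (fun l => H.Adj v (e l))).card ≤ H.maxDegree := by
  calc (univ.filter (fun l => H.Adj v (e l))).card
      ≤ (H.neighborFinset v).card := by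
        apply Finset.card_le_card_of_injOn e
        · intro l hl
          simp only [Finset.mem_coe, mem_filter] at hl
          simpa [SimpleGraph.mem_neighborFinset] using hl.2
        · exact he.injOn
    _ = H.degree v := rfl
    _ ≤ H.maxDegree := SimpleGraph.degree_le_maxDegree _ _

lemma Lset_card_le (g : ZMod n ≃ V) (k : ZMod n) :
    (Lset H g k).card ≤ 2 * H.maxDegree := by
  have hsub : Lset H g k ⊆
      (univ.filter (fun l => H.Adj (g k) (g l))) ∪
      (univ.filter (fun l => H.Adj (g k) (g (l + 1)))) := by
    intro l hl
    simp only [Lset, mem_filter, mem_union] at hl ⊢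
    rcases hl.2 with ⟨h1, _⟩ | ⟨h1, _⟩
    · exact Or.inl ⟨mem_univ _, h1⟩
    · exact Or.inr ⟨mem_univ _, h1⟩
  calc (Lset H g k).card ≤ _ := Finset.card_le_card hsub
    _ ≤ _ + _ := Finset.card_union_le _ _
    _ ≤ H.maxDegree + H.maxDegree := by
        gcongr
        · exact card_filter_H_le _ g g.injective
        · exact card_filter_H_le _ (fun l => g (l + 1))
            (g.injective.comp (fun a b h => by simpa using h))
    _ = 2 * H.maxDegree := by ring

lemma Mc_le (g : ZMod n ≃ V) : Mc H g ≤ 2 * n * H.maxDegree := by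
  calc Mc H g ≤ ∑ _k : ZMod n, 2 * H.maxDegree :=
        Finset.sum_le_sum (fun k _ => Lset_card_le g k)
    _ = n * (2 * H.maxDegree) := by
        rw [Finset.sum_const, Finset.card_univ, ZMod.card, smul_eq_mul]
    _ = 2 * n * H.maxDegree := by ring

/-- rotation invariance of the potential -/
def grot (g : ZMod n ≃ V) (t : ZMod n) : ZMod n ≃ V := (Equiv.addRight t).trans g

lemma grot_apply (g : ZMod n ≃ V) (t k : ZMod n) : grot g t k = g (k + t) := rfl

lemma badp_grot (g : ZMod n ≃ V) (t k l : ZMod n) :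
    badp H (grot g t) k l ↔ badp H g (k + t) (l + t) := by
  unfold badp
  rw [grot_apply, grot_apply, grot_apply, grot_apply,
    add_right_comm k 1 t, add_right_comm l 1 t]

lemma bE_grot (g : ZMod n ≃ V) (t : ZMod n) : bE G (grot g t) = bE G g := by
  unfold bE
  apply Finset.card_equiv (Equiv.addRight t)
  intro k
  simp only [mem_filter, mem_univ, true_and, Equiv.coe_addRight]
  rw [grot_apply, grot_apply, add_right_comm k 1 t]

lemma Mc_grot (g : ZMod n ≃ V) (t : ZMod n) : Mc H (grot g t) = Mc H g := by
  unfold Mc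
  have h1 : ∀ k, (Lset H (grot g t) k).card = (Lset H g (k + t)).card := by
    intro k
    apply Finset.card_equiv (Equiv.addRight t)
    intro l
    simp only [Lset, mem_filter, mem_univ, true_and, Equiv.coe_addRight]
    exact badp_grot g t k l
  calc ∑ k : ZMod n, (Lset H (grot g t) k).card
      = ∑ k : ZMod n, (Lset H g (k + t)).card := by simp [h1]
    _ = ∑ k : ZMod n, (Lset H g k).card := Equiv.sum_comp (Equiv.addRight t) (fun k => (Lset H g k).card)

lemma Phi_grot (g : ZMod n ≃ V) (t : ZMod n) : Phi G H (grot g t) = Phi G H g := by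
  unfold Phi; rw [bE_grot, Mc_grot]

end arr


section main

variable {V : Type*} [Fintype V] [DecidableEq V]
variable {G H : SimpleGraph V} [DecidableRel G.Adj] [DecidableRel H.Adj]
variable {n : ℕ} [NeZero n]

lemma swap_exists (hn4 : 4 ≤ n) {i : ZMod n} (hi2 : 2 ≤ i.val) (hin : i.val ≤ n - 2)
    (g : ZMod n ≃ V) :
    ∃ g' : ZMod n ≃ V, g' 0 = g 0 ∧ g' 1 = g i ∧ g' i = g 1 ∧ g' (i + 1) = g (i + 1) ∧
      ∀ k, k ≠ 0 → k ≠ i →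
        ((g' k = g (phm i k + 1) ∧ g' (k + 1) = g (phm i k)) ∨
         (g' k = g (phm i k) ∧ g' (k + 1) = g (phm i k + 1))) := by
  have hi : i.val + 1 < n := by have := i.val_lt; omega
  refine ⟨(Function.Involutive.toPerm _ (rho_invol hi)).trans g, ?_, ?_, ?_, ?_, ?_⟩
  · show g (rho i 0) = g 0
    rw [rho_zero]
  · show g (rho i 1) = g i
    rw [rho_one (by omega) (by omega)]
  · show g (rho i i) = g 1
    rw [rho_self (by omega)]
  · show g (rho i (i + 1)) = g (i + 1)
    rw [rho_succ hi]
  · intro k hk0 hki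
    rcases transfer hi2 hi hk0 hki with ⟨e1, e2⟩ | ⟨e1, e2⟩
    · exact Or.inl ⟨congrArg g e1, congrArg g e2⟩
    · exact Or.inr ⟨congrArg g e1, congrArg g e2⟩

lemma phm_ne_zero (hi : i.val + 1 < n) {k : ZMod n} (hk : k ≠ 0) : phm i k ≠ 0 := by
  intro h
  apply hk
  have := phm_invol (i := i) hi k
  rw [h] at this
  rw [← this, phm_zero]

lemma phm_ne_self (hi : i.val + 1 < n) {k : ZMod n} (hk : k ≠ i) : phm i k ≠ i := by
  intro h
  apply hk
  have := phm_invol (i := i) hi k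
  rw [h] at this
  rw [← this, phm_self]

lemma bE_swap (hn4 : 4 ≤ n) {i : ZMod n} (hi2 : 2 ≤ i.val) (hin : i.val ≤ n - 2)
    {g g' : ZMod n ≃ V}
    (h0 : g' 0 = g 0) (h1 : g' 1 = g i) (hii : g' i = g 1) (hi1 : g' (i + 1) = g (i + 1))
    (htr : ∀ k, k ≠ 0 → k ≠ i →
      ((g' k = g (phm i k + 1) ∧ g' (k + 1) = g (phm i k)) ∨
       (g' k = g (phm i k) ∧ g' (k + 1) = g (phm i k + 1))))
    (hfg1 : G.Adj (g 0) (g i)) (hfg2 : G.Adj (g 1) (g (i + 1))) :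
    bE G g' ≤ (((univ.filter (fun k : ZMod n => ¬ G.Adj (g k) (g (k + 1))))).erase 0).card := by
  have hi : i.val + 1 < n := by have := i.val_lt; omega
  apply Finset.card_le_card_of_injOn (phm i) _ ((phm_invol hi).injective.injOn)
  intro k hk
  simp only [Finset.mem_coe, bE, mem_filter, mem_univ, true_and] at hk
  have hk0 : k ≠ 0 := by
    rintro rfl
    rw [zero_add, h0, h1] at hk
    exact hk hfg1
  have hki : k ≠ i := by
    rintro rfl
    rw [hii, hi1] at hk
    exact hk hfg2
  rw [Finset.mem_coe, mem_erase]
  refine ⟨phm_ne_zero hi hk0, ?_⟩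
  simp only [mem_filter, mem_univ, true_and]
  rcases htr k hk0 hki with ⟨e1, e2⟩ | ⟨e1, e2⟩
  · rw [e1, e2] at hk
    exact fun hadj => hk hadj.symm
  · rw [e1, e2] at hk
    exact hk

/-- the candidate set for the exchange -/
def Acal (G : SimpleGraph V) [DecidableRel G.Adj] (g : ZMod n ≃ V) : Finset (ZMod n) :=
  univ.filter (fun i => 2 ≤ i.val ∧ i.val ≤ n - 2 ∧
    G.Adj (g 0) (g i) ∧ G.Adj (g 1) (g (i + 1)))

lemma card_Acal (hn4 : 4 ≤ n) (g : ZMod n ≃ V) :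
    2 * G.minDegree ≤ (Acal G g).card + n + 1 := by
  classical
  set A : Finset (ZMod n) :=
    univ.filter (fun i => 2 ≤ i.val ∧ i.val ≤ n - 2 ∧ G.Adj (g 0) (g i)) with hA
  set B : Finset (ZMod n) :=
    univ.filter (fun i => 2 ≤ i.val ∧ i.val ≤ n - 2 ∧ G.Adj (g 1) (g (i + 1))) with hB
  have hone : (1 : ZMod n).val = 1 := val_one_of (by omega)
  -- lower bound for A
  have hcardA : G.minDegree ≤ A.card + 2 := by
    have hsub : (G.neighborFinset (g 0) \ {g 1, g ((n - 1 : ℕ) : ZMod n)}).card ≤ A.card := by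
      apply Finset.card_le_card_of_injOn g.symm _ (g.symm.injective.injOn)
      intro v hv
      simp only [Finset.mem_coe, mem_sdiff, SimpleGraph.mem_neighborFinset, mem_insert, mem_singleton] at hv
      obtain ⟨hadj, hne⟩ := hv
      set m := g.symm v with hm
      have hgm : g m = v := g.apply_symm_apply v
      have hm0 : m ≠ 0 := fun h => hadj.ne' (by rw [← hgm, h])
      have hm1 : m ≠ 1 := fun h => hne (Or.inl (by rw [← hgm, h]))
      have hmn : m ≠ ((n - 1 : ℕ) : ZMod n) := fun h => hne (Or.inr (by rw [← hgm, h]))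
      have hv0 : m.val ≠ 0 := fun h => hm0 (val_inj (by rw [h, ZMod.val_zero]))
      have hv1 : m.val ≠ 1 := fun h => hm1 (val_inj (by rw [h, hone]))
      have hvn : m.val ≠ n - 1 := fun h =>
        hmn (val_inj (by rw [h, ZMod.val_cast_of_lt (by omega)]))
      have hvlt : m.val < n := m.val_lt
      simp only [Finset.mem_coe, hA, mem_filter, mem_univ, true_and]
      exact ⟨by omega, by omega, by rw [hgm]; exact hadj⟩
    have hdeg : G.minDegree ≤ (G.neighborFinset (g 0)).card := G.minDegree_le_degree _
    have hsd := Finset.le_card_sdiff ({g 1, g ((n - 1 : ℕ) : ZMod n)}) (G.neighborFinset (g 0))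
    have hpair : ({g 1, g ((n - 1 : ℕ) : ZMod n)} : Finset V).card ≤ 2 :=
      Finset.card_insert_le _ _ |>.trans (by simp)
    omega
  -- lower bound for B
  have hcardB : G.minDegree ≤ B.card + 2 := by
    have hsub : (G.neighborFinset (g 1) \ {g 0, g ((2 : ℕ) : ZMod n)}).card ≤ B.card := by
      apply Finset.card_le_card_of_injOn (fun v => g.symm v - 1)
      · intro v hv
        simp only [Finset.mem_coe, mem_sdiff, SimpleGraph.mem_neighborFinset, mem_insert, mem_singleton] at hv
        obtain ⟨hadj, hne⟩ := hv
        set m := g.symm v with hm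
        have hgm : g m = v := g.apply_symm_apply v
        have hm0 : m ≠ 0 := fun h => hne (Or.inl (by rw [← hgm, h]))
        have hm1 : m ≠ 1 := fun h => hadj.ne' (by rw [← hgm, h])
        have hm2 : m ≠ ((2 : ℕ) : ZMod n) := fun h => hne (Or.inr (by rw [← hgm, h]))
        have hv0 : m.val ≠ 0 := fun h => hm0 (val_inj (by rw [h, ZMod.val_zero]))
        have hv1 : m.val ≠ 1 := fun h => hm1 (val_inj (by rw [h, hone]))
        have hv2 : m.val ≠ 2 := fun h =>
          hm2 (val_inj (by rw [h, ZMod.val_cast_of_lt (by omega)]))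
        have hvlt : m.val < n := m.val_lt
        have hsubval : (m - 1).val = m.val - 1 := by
          rw [val_sub' m 1 (by omega)]
          rw [hone]
        have hma : m - 1 + 1 = m := by ring
        simp only [Finset.mem_coe, hB, mem_filter, mem_univ, true_and]
        rw [← hm]
        refine ⟨by omega, by omega, ?_⟩
        rw [hma, hgm]
        exact hadj
      · intro a _ b _ hab
        have : g.symm a = g.symm b := by
          have := congrArg (· + (1 : ZMod n)) hab
          simpa using this
        exact g.symm.injective this
    have hdeg : G.minDegree ≤ (G.neighborFinset (g 1)).card := G.minDegree_le_degree _
    have hsd := Finset.le_card_sdiff ({g 0, g ((2 : ℕ) : ZMod n)}) (G.neighborFinset (g 1))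
    have hpair : ({g 0, g ((2 : ℕ) : ZMod n)} : Finset V).card ≤ 2 :=
      Finset.card_insert_le _ _ |>.trans (by simp)
    omega
  -- A ∩ B = Acal
  have hAB : A ∩ B = Acal G g := by
    ext j
    simp only [hA, hB, Acal, mem_inter, mem_filter, mem_univ, true_and]
    tauto
  -- A ∪ B is small
  have hU : (A ∪ B).card ≤ n - 3 := by
    have hsub : A ∪ B ⊆ univ.filter (fun i : ZMod n => 2 ≤ i.val ∧ i.val ≤ n - 2) := by
      intro j hj
      simp only [hA, hB, mem_union, mem_filter, mem_univ, true_and] at hj ⊢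
      rcases hj with ⟨h1, h2, _⟩ | ⟨h1, h2, _⟩ <;> exact ⟨h1, h2⟩
    have hval : (univ.filter (fun i : ZMod n => 2 ≤ i.val ∧ i.val ≤ n - 2)).card ≤
        (Finset.Icc 2 (n - 2)).card := by
      apply Finset.card_le_card_of_injOn ZMod.val
      · intro j hj
        simp only [Finset.mem_coe, mem_filter, mem_univ, true_and] at hj
        simp only [Finset.mem_coe, Finset.mem_Icc]
        exact hj
      · exact fun a _ b _ h => val_inj h
    have hicc : (Finset.Icc 2 (n - 2)).card = n - 3 := by
      rw [Nat.card_Icc]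
      omega
    calc (A ∪ B).card ≤ _ := Finset.card_le_card hsub
      _ ≤ _ := hval
      _ = n - 3 := hicc
  have hiu := Finset.card_union_add_card_inter A B
  have hABc : (A ∩ B).card = (Acal G g).card := by rw [hAB]
  omega

lemma mem_Acal {g : ZMod n ≃ V} {i : ZMod n} (h : i ∈ Acal G g) :
    2 ≤ i.val ∧ i.val ≤ n - 2 ∧ G.Adj (g 0) (g i) ∧ G.Adj (g 1) (g (i + 1)) := by
  simpa [Acal] using h

lemma phaseA (hn4 : 4 ≤ n) (hr : n + 2 ≤ 2 * G.minDegree) (g : ZMod n ≃ V)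
    (hbad0 : ¬ G.Adj (g 0) (g 1)) : ∃ g' : ZMod n ≃ V, Phi G H g' < Phi G H g := by
  have hno : (Acal G g).Nonempty := by
    rw [← Finset.card_pos]
    have := card_Acal (G := G) hn4 g
    omega
  obtain ⟨i, hi⟩ := hno
  obtain ⟨hi2, hin, hfg1, hfg2⟩ := mem_Acal hi
  obtain ⟨g', h0, h1, hii, hi1, htr⟩ := swap_exists hn4 hi2 hin g
  have hmem0 : (0 : ZMod n) ∈ univ.filter (fun k : ZMod n => ¬ G.Adj (g k) (g (k + 1))) := by
    simp only [mem_filter, mem_univ, true_and, zero_add]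
    exact hbad0
  have hbE : bE G g' ≤ bE G g - 1 := by
    have := bE_swap hn4 hi2 hin h0 h1 hii hi1 htr hfg1 hfg2
    rwa [Finset.card_erase_of_mem hmem0] at this
  have hbE1 : 1 ≤ bE G g := Finset.card_pos.mpr ⟨0, hmem0⟩
  have hMc' : Mc H g' ≤ 2 * n * H.maxDegree := Mc_le g'
  have hMcg : 0 ≤ Mc H g := Nat.zero_le _
  refine ⟨g', ?_⟩
  unfold Phi
  set W := 2 * n * H.maxDegree + 1 with hW
  have h5 : W * bE G g' ≤ W * (bE G g - 1) := Nat.mul_le_mul_left _ hbE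
  have h6 : W * (bE G g - 1) + W = W * bE G g := by
    conv_rhs => rw [← Nat.sub_add_cancel hbE1]
    ring
  have h7 : Mc H g' < W := by omega
  calc W * bE G g' + Mc H g' ≤ W * (bE G g - 1) + Mc H g' := by omega
    _ < W * (bE G g - 1) + W := by omega
    _ = W * bE G g := h6
    _ ≤ W * bE G g + Mc H g := Nat.le_add_right _ _

lemma phaseB (hn4 : 4 ≤ n)
    (hr : n + 8 * (H.maxDegree * H.maxDegree) + H.maxDegree + 2 ≤ 2 * G.minDegree)
    (hdisj : ∀ a b, G.Adj a b → ¬ H.Adj a b)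
    (g : ZMod n ≃ V) (hGE : bE G g = 0) {k₀ : ZMod n} (hk : badp H g 0 k₀) :
    ∃ g' : ZMod n ≃ V, Phi G H g' < Phi G H g := by
  have hadjall : ∀ k, G.Adj (g k) (g (k + 1)) := bE_eq_zero_iff.mp hGE
  set s := H.maxDegree with hs
  set T0 : Finset (ZMod n) := univ.filter (fun k => H.Adj (g 0) (g k)) with hT0
  set T1 : Finset (ZMod n) := univ.filter (fun k => H.Adj (g 1) (g k)) with hT1
  set S1 : Finset (ZMod n) := T0.biUnion (fun k =>
    univ.filter (fun j => H.Adj (g (k + 1)) (g j)) ∪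
    univ.filter (fun j => H.Adj (g (k - 1)) (g j))) with hS1
  set S2 : Finset (ZMod n) := T1.biUnion (fun k =>
    univ.filter (fun j => H.Adj (g (k + 1)) (g (j + 1))) ∪
    univ.filter (fun j => H.Adj (g (k - 1)) (g (j + 1)))) with hS2
  set S3 : Finset (ZMod n) := univ.filter (fun j => H.Adj (g 0) (g (j + 1))) with hS3
  have hinj1 : Function.Injective (fun l : ZMod n => g (l + 1)) :=
    g.injective.comp (fun a b h => by simpa using h)
  have hcT0 : T0.card ≤ s := card_filter_H_le _ g g.injective
  have hcT1 : T1.card ≤ s := card_filter_H_le _ g g.injective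
  have hcS1 : S1.card ≤ s * (2 * s) := by
    calc S1.card ≤ ∑ k ∈ T0, ((univ.filter (fun j => H.Adj (g (k + 1)) (g j)) ∪
        univ.filter (fun j => H.Adj (g (k - 1)) (g j))).card) := Finset.card_biUnion_le
      _ ≤ ∑ _k ∈ T0, 2 * s := Finset.sum_le_sum (fun k _ => by
          refine le_trans (Finset.card_union_le _ _) ?_
          have h1 := card_filter_H_le (H := H) (g (k + 1)) g g.injective
          have h2 := card_filter_H_le (H := H) (g (k - 1)) g g.injective
          omega)
      _ = T0.card * (2 * s) := by rw [Finset.sum_const, smul_eq_mul]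
      _ ≤ s * (2 * s) := Nat.mul_le_mul_right _ hcT0
  have hcS2 : S2.card ≤ s * (2 * s) := by
    calc S2.card ≤ ∑ k ∈ T1, ((univ.filter (fun j => H.Adj (g (k + 1)) (g (j + 1))) ∪
        univ.filter (fun j => H.Adj (g (k - 1)) (g (j + 1)))).card) := Finset.card_biUnion_le
      _ ≤ ∑ _k ∈ T1, 2 * s := Finset.sum_le_sum (fun k _ => by
          refine le_trans (Finset.card_union_le _ _) ?_
          have h1 := card_filter_H_le (H := H) (g (k + 1)) _ hinj1
          have h2 := card_filter_H_le (H := H) (g (k - 1)) _ hinj1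
          omega)
      _ = T1.card * (2 * s) := by rw [Finset.sum_const, smul_eq_mul]
      _ ≤ s * (2 * s) := Nat.mul_le_mul_right _ hcT1
  have hcS3 : S3.card ≤ s := card_filter_H_le _ _ hinj1
  have hcard : (Acal G g \ (S1 ∪ S2 ∪ S3)).Nonempty := by
    rw [← Finset.card_pos]
    have h1 := card_Acal (G := G) hn4 g
    have h2a := Finset.card_union_le S1 S2
    have h2b := Finset.card_union_le (S1 ∪ S2) S3
    have h3 := Finset.le_card_sdiff (S1 ∪ S2 ∪ S3) (Acal G g)
    have hring : s * (2 * s) = 2 * (s * s) := by ring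
    omega
  obtain ⟨i, hi'⟩ := hcard
  rw [Finset.mem_sdiff] at hi'
  obtain ⟨hiA, hiS⟩ := hi'
  obtain ⟨hi2, hin, hfg1, hfg2⟩ := mem_Acal hiA
  have hiS1 : i ∉ S1 := fun h => hiS (Finset.mem_union_left _ (Finset.mem_union_left _ h))
  have hiS2 : i ∉ S2 := fun h => hiS (Finset.mem_union_left _ (Finset.mem_union_right _ h))
  have hiS3 : i ∉ S3 := fun h => hiS (Finset.mem_union_right _ h)
  have hival : i.val + 1 < n := by have := i.val_lt; omega
  have P1 : ∀ k, ¬ bd H (g 0) (g i) (g k) (g (k + 1)) := by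
    intro k hbd
    apply hiS1
    rw [hS1]
    rcases hbd with ⟨h1, h2⟩ | ⟨h1, h2⟩
    · refine Finset.mem_biUnion.mpr ⟨k, ?_, Finset.mem_union_left _ ?_⟩
      · rw [hT0]; exact Finset.mem_filter.mpr ⟨mem_univ _, h1⟩
      · exact Finset.mem_filter.mpr ⟨mem_univ _, h2.symm⟩
    · refine Finset.mem_biUnion.mpr ⟨k + 1, ?_, Finset.mem_union_right _ ?_⟩
      · rw [hT0]; exact Finset.mem_filter.mpr ⟨mem_univ _, h1⟩
      · refine Finset.mem_filter.mpr ⟨mem_univ _, ?_⟩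
        rw [add_sub_cancel_right]
        exact h2.symm
  have P2 : ∀ k, ¬ bd H (g 1) (g (i + 1)) (g k) (g (k + 1)) := by
    intro k hbd
    apply hiS2
    rw [hS2]
    rcases hbd with ⟨h1, h2⟩ | ⟨h1, h2⟩
    · refine Finset.mem_biUnion.mpr ⟨k, ?_, Finset.mem_union_left _ ?_⟩
      · rw [hT1]; exact Finset.mem_filter.mpr ⟨mem_univ _, h1⟩
      · exact Finset.mem_filter.mpr ⟨mem_univ _, h2.symm⟩
    · refine Finset.mem_biUnion.mpr ⟨k + 1, ?_, Finset.mem_union_right _ ?_⟩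
      · rw [hT1]; exact Finset.mem_filter.mpr ⟨mem_univ _, h1⟩
      · refine Finset.mem_filter.mpr ⟨mem_univ _, ?_⟩
        rw [add_sub_cancel_right]
        exact h2.symm
  have P3 : ¬ H.Adj (g 0) (g (i + 1)) := by
    intro h
    exact hiS3 (by rw [hS3]; exact Finset.mem_filter.mpr ⟨mem_univ _, h⟩)
  obtain ⟨g', h0, h1g, hii, hi1, htr⟩ := swap_exists hn4 hi2 hin g
  have hG01 : G.Adj (g 0) (g 1) := by have := hadjall 0; rwa [zero_add] at this
  have claim0 : ∀ l, ¬ badp H g' 0 l := by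
    intro l hbd
    unfold badp at hbd
    rw [h0, zero_add, h1g] at hbd
    by_cases hl0 : l = 0
    · subst hl0
      rw [h0, zero_add, h1g] at hbd
      exact not_bd_self hdisj hfg1 hbd
    by_cases hli : l = i
    · subst hli
      rw [hii, hi1] at hbd
      rcases hbd with ⟨ha, _⟩ | ⟨ha, _⟩
      · exact hdisj _ _ hG01 ha
      · exact P3 ha
    · rcases htr l hl0 hli with ⟨e1, e2⟩ | ⟨e1, e2⟩
      · rw [e1, e2] at hbd; exact P1 (phm i l) (bd_swap_right hbd)
      · rw [e1, e2] at hbd; exact P1 (phm i l) hbd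
  have claimi : ∀ l, ¬ badp H g' i l := by
    intro l hbd
    by_cases hl0 : l = 0
    · subst hl0
      exact claim0 i (bd_comm hbd)
    · unfold badp at hbd
      rw [hii, hi1] at hbd
      by_cases hli : l = i
      · subst hli
        rw [hii, hi1] at hbd
        exact not_bd_self hdisj hfg2 hbd
      · rcases htr l hl0 hli with ⟨e1, e2⟩ | ⟨e1, e2⟩
        · rw [e1, e2] at hbd; exact P2 (phm i l) (bd_swap_right hbd)
        · rw [e1, e2] at hbd; exact P2 (phm i l) hbd
  -- the new arrangement has no bad G-edges
  have hbE' : bE G g' = 0 := by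
    have h := bE_swap hn4 hi2 hin h0 h1g hii hi1 htr hfg1 hfg2
    have hempty : (univ.filter (fun k : ZMod n => ¬ G.Adj (g k) (g (k + 1)))) = ∅ := by
      rw [← Finset.card_eq_zero]
      exact hGE
    rw [hempty] at h
    simpa using h
  -- the conflict count strictly decreases
  set F : ZMod n → ℕ := fun k' => if k' = 0 ∨ k' = i then 0
    else (((Lset H g k').erase 0).erase i).card with hF
  have hLzero : ∀ k, k = 0 ∨ k = i → (Lset H g' k).card = 0 := by
    intro k hk01
    rw [Finset.card_eq_zero]
    apply Finset.eq_empty_iff_forall_notMem.mpr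
    intro l hlmem
    simp only [Lset, mem_filter, mem_univ, true_and] at hlmem
    rcases hk01 with rfl | rfl
    · exact claim0 l hlmem
    · exact claimi l hlmem
  have hstep : ∀ k, (Lset H g' k).card ≤ F (phm i k) := by
    intro k
    by_cases hk01 : k = 0 ∨ k = i
    · rw [hLzero k hk01]
      exact Nat.zero_le _
    · push_neg at hk01
      have hFval : F (phm i k) = (((Lset H g (phm i k)).erase 0).erase i).card := by
        rw [hF]
        simp only
        rw [if_neg]
        push_neg
        exact ⟨phm_ne_zero hival hk01.1, phm_ne_self hival hk01.2⟩
      rw [hFval]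
      apply Finset.card_le_card_of_injOn (phm i) _ ((phm_invol hival).injective.injOn)
      intro l hl
      simp only [Finset.mem_coe, Lset, mem_filter, mem_univ, true_and] at hl
      have hl0 : l ≠ 0 := by
        rintro rfl
        exact claim0 k (bd_comm hl)
      have hli : l ≠ i := by
        rintro rfl
        exact claimi k (bd_comm hl)
      have hbb : badp H g (phm i k) (phm i l) := by
        unfold badp at hl ⊢
        rcases htr k hk01.1 hk01.2 with ⟨ek1, ek2⟩ | ⟨ek1, ek2⟩ <;>
          rcases htr l hl0 hli with ⟨el1, el2⟩ | ⟨el1, el2⟩ <;>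
          rw [ek1, ek2, el1, el2] at hl
        · exact bd_swap_right (bd_swap_left hl)
        · exact bd_swap_left hl
        · exact bd_swap_right hl
        · exact hl
      simp only [Finset.mem_coe, Finset.mem_erase, Lset, mem_filter, mem_univ, true_and]
      exact ⟨phm_ne_self hival hli, phm_ne_zero hival hl0, hbb⟩
  have hMc : Mc H g' + 1 ≤ Mc H g := by
    have hsum1 : Mc H g' ≤ ∑ k : ZMod n, F (phm i k) :=
      Finset.sum_le_sum (fun k _ => hstep k)
    have hsum2 : ∑ k : ZMod n, F (phm i k) = ∑ k : ZMod n, F k :=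
      Equiv.sum_comp (Function.Involutive.toPerm _ (phm_invol hival)) F
    have hk₀mem : k₀ ∈ Lset H g 0 := by
      simp only [Lset, mem_filter, mem_univ, true_and]
      exact hk
    have hL0 : 1 ≤ (Lset H g 0).card := Finset.card_pos.mpr ⟨k₀, hk₀mem⟩
    have hFle : ∀ k', F k' ≤ (Lset H g k').card := by
      intro k'
      rw [hF]
      simp only
      by_cases h : k' = 0 ∨ k' = i
      · rw [if_pos h]; exact Nat.zero_le _
      · rw [if_neg h]
        exact Finset.card_le_card ((Finset.erase_subset _ _).trans (Finset.erase_subset _ _))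
    have hF0 : F 0 = 0 := by rw [hF]; simp
    have hsplit : F 0 + ∑ k ∈ univ.erase 0, F k = ∑ k : ZMod n, F k :=
      Finset.add_sum_erase _ F (mem_univ 0)
    have hsplit2 : (Lset H g 0).card + ∑ k ∈ univ.erase 0, (Lset H g k).card
        = ∑ k : ZMod n, (Lset H g k).card :=
      Finset.add_sum_erase _ (fun k => (Lset H g k).card) (mem_univ 0)
    have hterm : ∑ k ∈ univ.erase 0, F k ≤ ∑ k ∈ univ.erase 0, (Lset H g k).card :=
      Finset.sum_le_sum (fun k _ => hFle k)
    have hMceq : Mc H g = ∑ k : ZMod n, (Lset H g k).card := rfl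
    have hMceq' : Mc H g' = ∑ k : ZMod n, (Lset H g' k).card := rfl
    omega
  refine ⟨g', ?_⟩
  unfold Phi
  rw [hbE', hGE]
  omega

lemma good_arrangement (hn4 : 4 ≤ n)
    (hr : n + 8 * (H.maxDegree * H.maxDegree) + H.maxDegree + 2 ≤ 2 * G.minDegree)
    (hdisj : ∀ a b, G.Adj a b → ¬ H.Adj a b)
    (hcard : Fintype.card V = n) :
    ∃ g : ZMod n ≃ V, (∀ k, G.Adj (g k) (g (k + 1))) ∧ ∀ k l, ¬ badp H g k l := by
  have hcard' : Fintype.card (ZMod n) = Fintype.card V := by rw [ZMod.card, hcard]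
  obtain ⟨g, -, hmin⟩ := Finset.exists_min_image univ (Phi G H)
    ⟨Fintype.equivOfCardEq hcard', mem_univ _⟩
  have hbE : bE G g = 0 := by
    by_contra h
    obtain ⟨k, hkmem⟩ := Finset.card_pos.mp (Nat.pos_of_ne_zero h)
    simp only [mem_filter, mem_univ, true_and] at hkmem
    have hb1 : ¬ G.Adj (grot g k 0) (grot g k 1) := by
      rw [grot_apply, grot_apply, zero_add, add_comm]
      exact hkmem
    obtain ⟨g', hg'⟩ := phaseA (G := G) (H := H) hn4 (by omega) (grot g k) hb1
    rw [Phi_grot] at hg'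
    exact absurd (hmin g' (mem_univ _)) (by omega)
  have hMc : Mc H g = 0 := by
    by_contra h
    have hex : ∃ k, (Lset H g k).card ≠ 0 := by
      by_contra hall
      push_neg at hall
      exact h (Finset.sum_eq_zero (fun k _ => hall k))
    obtain ⟨k, hkne⟩ := hex
    obtain ⟨l, hl⟩ := Finset.card_pos.mp (Nat.pos_of_ne_zero hkne)
    simp only [Lset, mem_filter, mem_univ, true_and] at hl
    have hb : badp H (grot g k) 0 (l - k) := by
      rw [badp_grot, zero_add, sub_add_cancel]
      exact hl
    have hGE1 : bE G (grot g k) = 0 := by rw [bE_grot]; exact hbE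
    obtain ⟨g', hg'⟩ := phaseB hn4 hr hdisj (grot g k) hGE1 hb
    rw [Phi_grot] at hg'
    exact absurd (hmin g' (mem_univ _)) (by omega)
  refine ⟨g, bE_eq_zero_iff.mp hbE, ?_⟩
  intro k l hb
  have hzero := (Finset.sum_eq_zero_iff).mp hMc k (mem_univ _)
  have : l ∈ Lset H g k := by
    simp only [Lset, mem_filter, mem_univ, true_and]
    exact hb
  rw [Finset.card_eq_zero] at hzero
  rw [hzero] at this
  exact absurd this (Finset.notMem_empty l)

/-- build a walk from a chain of adjacent vertices -/
def wlk (G : SimpleGraph V) : (a b : V) → (l : List V) →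
    (h : List.Chain G.Adj a (l ++ [b])) → G.Walk a b
  | _, _, [], h => SimpleGraph.Walk.cons (List.chain_cons.mp h).1 SimpleGraph.Walk.nil
  | _, b, c :: l, h =>
      SimpleGraph.Walk.cons (List.chain_cons.mp h).1 (wlk G c b l (List.chain_cons.mp h).2)

lemma wlk_support (G : SimpleGraph V) :
    ∀ (a b : V) (l : List V) (h : List.Chain G.Adj a (l ++ [b])),
      (wlk G a b l h).support = a :: (l ++ [b])
  | a, b, [], h => by simp [wlk]
  | a, b, c :: l, h => by simp [wlk, wlk_support G c b l (List.chain_cons.mp h).2]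

lemma wlk_darts (G : SimpleGraph V) :
    ∀ (a b : V) (l : List V) (h : List.Chain G.Adj a (l ++ [b])),
      (wlk G a b l h).darts.map SimpleGraph.Dart.toProd
        = List.zip (a :: (l ++ [b])) (l ++ [b])
  | a, b, [], h => by simp [wlk]
  | a, b, c :: l, h => by
      simp only [wlk, SimpleGraph.Walk.darts_cons, List.map_cons,
        wlk_darts G c b l (List.chain_cons.mp h).2]
      simp [List.zip]

lemma wlk_ne_nil (G : SimpleGraph V) (a b : V) (l : List V)
    (h : List.Chain G.Adj a (l ++ [b])) : ¬ (wlk G a b l h).Nil := by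
  cases l <;> exact SimpleGraph.Walk.not_nil_cons

end main

end DKS

/-- **Theorem (Demetrovics–Katona–Sali).**
Let `G` and `H` be graphs on the same vertex set of size `n`, with disjoint edge
sets.  Let `r` be the minimum degree of `G` and `s` the maximum degree of `H`.
If `2r − 8s² − s − 1 > n` then `G` has a Hamilton cycle such that whenever
`(a,b)` and `(c,d)` are edges of the cycle (directed along the cycle), the pairs
`(b,c)` and `(d,a)` are not both edges of `H`. -/
theorem dks_hamilton_cycle_avoiding_alternating_four_cycles
    {V : Type*} [Fintype V] [DecidableEq V]
    (G H : SimpleGraph V) [DecidableRel G.Adj] [DecidableRel H.Adj]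
    (n : ℕ) (hn : Fintype.card V = n)
    (hdisj : Disjoint G.edgeSet H.edgeSet)
    (hcond : (n : ℤ) < 2 * (G.minDegree : ℤ) - 8 * (H.maxDegree : ℤ) ^ 2
        - (H.maxDegree : ℤ) - 1) :
    ∃ (v : V) (p : G.Walk v v), p.IsHamiltonianCycle ∧
      ∀ d₁ ∈ p.darts, ∀ d₂ ∈ p.darts,
        ¬ (H.Adj d₁.toProd.2 d₂.toProd.1 ∧ H.Adj d₂.toProd.2 d₁.toProd.1) := by
  classical
  have hdisj' : ∀ a b, G.Adj a b → ¬ H.Adj a b := fun a b hG hH =>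
    Set.disjoint_left.mp hdisj (G.mem_edgeSet.mpr hG) (H.mem_edgeSet.mpr hH)
  -- numeric preliminaries
  obtain ⟨a, ha⟩ : ∃ a : ℕ, a = H.maxDegree * H.maxDegree := ⟨_, rfl⟩
  have hsq : ((H.maxDegree : ℤ)) ^ 2 = (a : ℤ) := by rw [ha]; push_cast; ring
  rw [hsq] at hcond
  have hr : n + 8 * (H.maxDegree * H.maxDegree) + H.maxDegree + 2 ≤ 2 * G.minDegree := by
    rw [← ha]; omega
  have hnV : Nonempty V := by
    rcases isEmpty_or_nonempty V with hV | hV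
    · exfalso
      have h0 : n = 0 := by rw [← hn]; exact Fintype.card_eq_zero
      have hr0 : G.minDegree = 0 := by
        simp [SimpleGraph.minDegree, Finset.univ_eq_empty]
      omega
    · exact hV
  obtain ⟨v₀⟩ := hnV
  have hdeg : G.minDegree ≤ G.degree v₀ := G.minDegree_le_degree v₀
  have hdlt : G.degree v₀ < n := by rw [← hn]; exact G.degree_lt_card_verts v₀
  have hn4 : 4 ≤ n := by omega
  haveI : NeZero n := ⟨by omega⟩
  obtain ⟨m, rfl⟩ : ∃ m, n = m + 1 := ⟨n - 1, by omega⟩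
  set n := m + 1 with hndef
  obtain ⟨g, hadj, hbad⟩ := DKS.good_arrangement (G := G) (H := H) hn4 hr hdisj' hn
  set f : ℕ → V := fun j => g (j : ZMod n) with hf
  set L : List V := List.map f (List.range (n + 1)) with hL0
  have hLlen : L.length = n + 1 := by simp [hL0]
  have hrange : List.range (n + 1) = 0 :: (List.range' 1 m ++ [1 + m]) := by
    rw [List.range_eq_range']
    rw [show n + 1 = (m + 1) + 1 from rfl]
    rw [List.range'_succ]
    rw [List.range'_1_concat]
  have hL : L = f 0 :: (List.map f (List.range' 1 m) ++ [f (1 + m)]) := by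
    rw [hL0, hrange]
    simp
  have hgetL : ∀ (i : ℕ) (hi : i < L.length), L.get ⟨i, hi⟩ = f i := by
    intro i hi
    simp [hL0]
  -- the chain
  have hch' : List.Chain' G.Adj L := by
    simp only [List.Chain']
    rw [List.isChain_iff_getElem]
    intro j hj
    have e := hgetL j (by omega)
    have e2 := hgetL (j + 1) hj
    simp only [List.get_eq_getElem] at e e2
    rw [e, e2]
    show G.Adj (g ((j : ℕ) : ZMod n)) (g ((j + 1 : ℕ) : ZMod n))
    have hcast : ((j + 1 : ℕ) : ZMod n) = (j : ZMod n) + 1 := by push_cast; ring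
    rw [hcast]
    exact hadj _
  have hchain : List.Chain G.Adj (f 0) (List.map f (List.range' 1 m) ++ [f (1 + m)]) := by
    rw [hL] at hch'
    exact hch'
  have hfa : f 0 = g 0 := by rw [hf]; simp
  have hfb : f (1 + m) = g 0 := by
    show g ((1 + m : ℕ) : ZMod n) = g 0
    have h01 : ((1 + m : ℕ) : ZMod n) = 0 := by
      rw [show 1 + m = n by omega]
      exact ZMod.natCast_self n
    rw [h01]
  set p : G.Walk (g 0) (g 0) :=
    (DKS.wlk G (f 0) (f (1 + m)) (List.map f (List.range' 1 m)) hchain).copy hfa hfb with hp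
  have hsupp : p.support = L := by
    rw [hp, SimpleGraph.Walk.support_copy, DKS.wlk_support, ← hL]
  have hlen : p.length = n := by
    have h1 := SimpleGraph.Walk.length_support p
    rw [hsupp, hLlen] at h1
    omega
  have hnil : ¬ p.Nil := by
    rw [SimpleGraph.Walk.nil_iff_length_eq, hlen]
    omega
  have hnenil : p ≠ SimpleGraph.Walk.nil := by
    intro h
    rw [h] at hlen
    simp at hlen
  have hdartsmap : p.darts.map SimpleGraph.Dart.toProd = List.zip L L.tail := by
    rw [hp, SimpleGraph.Walk.darts_copy, DKS.wlk_darts, hL]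
    rfl
  have hziplist : List.zip L L.tail =
      List.map (fun j => (f j, f (j + 1))) (List.range n) := by
    apply List.ext_getElem
    · simp [hL0]
    · intro j h1 h2
      simp only [hL0, List.getElem_zip, List.getElem_tail, List.getElem_map,
        List.getElem_range]
  have hdart2 : ∀ d ∈ p.darts, ∃ k : ZMod n, d.toProd = (g k, g (k + 1)) := by
    intro d hd
    have hmem : d.toProd ∈ p.darts.map SimpleGraph.Dart.toProd := List.mem_map_of_mem hd
    rw [hdartsmap, hziplist] at hmem
    obtain ⟨j, _, hjeq⟩ := List.mem_map.mp hmem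
    refine ⟨(j : ZMod n), ?_⟩
    rw [← hjeq, hf]
    have hcast : ((j + 1 : ℕ) : ZMod n) = (j : ZMod n) + 1 := by push_cast; ring
    simp [hcast]
  -- nodup facts
  have hcastinj : ∀ x y : ℕ, 1 ≤ x → x ≤ n → 1 ≤ y → y ≤ n →
      ((x : ZMod n) = (y : ZMod n)) → x = y := by
    intro x y hx1 hxn hy1 hyn h
    have hmod : x % n = y % n := by
      rw [← ZMod.val_natCast, ← ZMod.val_natCast, h]
    rcases eq_or_lt_of_le hxn with rfl | hx <;> rcases eq_or_lt_of_le hyn with h' | hy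
    · omega
    · rw [Nat.mod_self, Nat.mod_eq_of_lt hy] at hmod
      omega
    · rw [h'] at hmod
      rw [Nat.mod_self, Nat.mod_eq_of_lt hx] at hmod
      omega
    · rw [Nat.mod_eq_of_lt hx, Nat.mod_eq_of_lt hy] at hmod
      omega
  have hT : L.tail = List.map f (List.range' 1 n) := by
    rw [hL]
    rw [show (List.range' 1 n) = List.range' 1 m ++ [1 + m] from List.range'_1_concat]
    simp
  have hTnd : (List.map f (List.range' 1 n)).Nodup := by
    apply List.Nodup.map_on
    · intro x hx y hy hxy
      rw [List.mem_range'_1] at hx hy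
      exact hcastinj x y hx.1 (by omega) hy.1 (by omega) (g.injective hxy)
    · exact List.nodup_range'
  have hTmem : ∀ v : V, v ∈ List.map f (List.range' 1 n) := by
    intro v
    rw [List.mem_map]
    by_cases hk : g.symm v = 0
    · refine ⟨n, ?_, ?_⟩
      · rw [List.mem_range'_1]; omega
      · show g ((n : ℕ) : ZMod n) = v
        rw [ZMod.natCast_self n, ← hk, g.apply_symm_apply]
    · refine ⟨(g.symm v).val, ?_, ?_⟩
      · rw [List.mem_range'_1]
        have h1 : (g.symm v).val ≠ 0 := fun h => hk (DKS.val_inj (by rw [h, ZMod.val_zero]))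
        have h2 := (g.symm v).val_lt
        omega
      · show g (((g.symm v).val : ℕ) : ZMod n) = v
        rw [ZMod.natCast_rightInverse (g.symm v)]
        exact g.apply_symm_apply v
  have hcount : ∀ v : V, (List.map f (List.range' 1 n)).count v = 1 :=
    fun v => List.count_eq_one_of_mem hTnd (hTmem v)
  -- edges nodup
  have hedges : p.edges = List.map (fun j => s(f j, f (j + 1))) (List.range n) := by
    have : p.edges = (p.darts.map SimpleGraph.Dart.toProd).map (fun q => s(q.1, q.2)) := by
      rw [List.map_map]
      rfl
    rw [this, hdartsmap, hziplist, List.map_map]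
    rfl
  have hcastinj0 : ∀ x y : ℕ, x < n → y < n → ((x : ZMod n) = (y : ZMod n)) → x = y := by
    intro x y hx hy h
    have := congrArg ZMod.val h
    rwa [ZMod.val_cast_of_lt hx, ZMod.val_cast_of_lt hy] at this
  have hedgesnd : p.edges.Nodup := by
    rw [hedges]
    apply List.Nodup.map_on _ (List.nodup_range)
    intro x hx y hy heq
    rw [List.mem_range] at hx hy
    rcases (Sym2.mk_eq_mk_iff (p := (f x, f (x + 1))) (q := (f y, f (y + 1)))).mp heq with h | h
    · have h1 : f x = f y := congrArg Prod.fst h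
      exact hcastinj0 x y hx hy (g.injective h1)
    · exfalso
      have h1 : f x = f (y + 1) := by
        have := congrArg Prod.fst h
        simpa using this
      have h2 : f (x + 1) = f y := by
        have := congrArg Prod.snd h
        simpa using this
      have e1 : ((x : ℕ) : ZMod n) = ((y : ℕ) : ZMod n) + 1 := by
        have := g.injective h1
        push_cast at this
        exact this
      have e2 : ((x : ℕ) : ZMod n) + 1 = ((y : ℕ) : ZMod n) := by
        have := g.injective h2
        push_cast at this
        exact this
      have h20 : ((2 : ℕ) : ZMod n) = 0 := by
        push_cast
        linear_combination e2 - e1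
      have hdvd := (ZMod.natCast_eq_zero_iff 2 n).mp h20
      have := Nat.le_of_dvd (by norm_num) hdvd
      omega
  have hsuppnd : p.support.tail.Nodup := by
    rw [hsupp, hT]
    exact hTnd
  have hcycle : p.IsCycle := ⟨⟨⟨hedgesnd⟩, hnenil⟩, hsuppnd⟩
  have hhamtail : p.tail.IsHamiltonian := by
    intro v
    rw [SimpleGraph.Walk.support_tail_of_not_nil p hnil, hsupp, hT]
    exact hcount v
  refine ⟨g 0, p, ⟨hcycle, hhamtail⟩, ?_⟩
  intro d₁ hd₁ d₂ hd₂ hcontra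
  obtain ⟨k, hk⟩ := hdart2 d₁ hd₁
  obtain ⟨l, hl⟩ := hdart2 d₂ hd₂
  obtain ⟨hbc, hda⟩ := hcontra
  have e1 : d₁.toProd.2 = g (k + 1) := by rw [hk]
  have e2 : d₁.toProd.1 = g k := by rw [hk]
  have e3 : d₂.toProd.2 = g (l + 1) := by rw [hl]
  have e4 : d₂.toProd.1 = g l := by rw [hl]
  rw [e1, e4] at hbc
  rw [e3, e2] at hda
  exact hbad k l (Or.inr ⟨hda.symm, hbc⟩)
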